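/- The quadruple (u, B, p, r) = (0, B0, p, 0) is an exact stationary solution of the two-dimensional incompressible viscoresistive MHD system with fluid forcing f = 0 and magnetic forcing g(x,y) = (−8π²·(k² − 1)/(Re_m·D(x,y)³))·(sinh(2πy), k·sin(2πx)); explicitly, for every (x,y) ∈ ℝ²: (i) ∇p(x,y) − (curl B0)(x,y) × B0(x,y) = (0,0); (ii) (1/Re_m)·curl((curl B0))(x,y) = g(x,y); (iii) div u = 0 trivially; and (iv) div B0(x,y) = 0. -/

import Mathlib

open Real

/-- Island coalescence: `(u, B, p, r) = (0, B0, p, 0)` is an exact stationary solution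
of the 2D incompressible viscoresistive MHD system with forcing `f = 0` and
`g(x,y) = (−8π²(k²−1)/(Re_m·D³))·(sinh(2πy), k·sin(2πx))`.  With
`j = curl B0 = ∂x B0₂ − ∂y B0₁` the scalar curl and `j × B0 = (−j·B0₂, j·B0₁)`:
(i) `∇p − j × B0 = (0,0)`;
(ii) `(1/Re_m)·(∂y j, −∂x j) = g`;
(iii) `div u = 0` trivially; (iv) `div B0 = 0`. -/
theorem island_exact_stationary_solution
    (k : ℝ) (hk0 : 0 < k) (hk1 : k < 1)
    (Rem : ℝ) (hRem : 0 < Rem)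
    (D : ℝ → ℝ → ℝ) (p j : ℝ → ℝ → ℝ)
    (hD : ∀ x y : ℝ, D x y = Real.cosh (2 * π * y) + k * Real.cos (2 * π * x))
    (hp : ∀ x y : ℝ, p x y = ((1 - k ^ 2) / 2) * (1 + 1 / (D x y) ^ 2))
    (hj : ∀ x y : ℝ, j x y =
      deriv (fun x' : ℝ => k * Real.sin (2 * π * x') / D x' y) x
        - deriv (fun y' : ℝ => Real.sinh (2 * π * y') / D x y') y) :
    ∀ x y : ℝ,
      -- (i) momentum: ∇p − (curl B0) × B0 = 0, componentwise:
      (deriv (fun x' : ℝ => p x' y) x - (-(j x y) * (k * Real.sin (2 * π * x) / D x y)) = 0) ∧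
      (deriv (fun y' : ℝ => p x y') y - j x y * (Real.sinh (2 * π * y) / D x y) = 0) ∧
      -- (ii) induction: (1/Re_m)·curl(curl B0) = g, componentwise:
      ((1 / Rem) * deriv (fun y' : ℝ => j x y') y
        = (-8 * π ^ 2 * (k ^ 2 - 1) / (Rem * (D x y) ^ 3)) * Real.sinh (2 * π * y)) ∧
      ((1 / Rem) * (-(deriv (fun x' : ℝ => j x' y) x))
        = (-8 * π ^ 2 * (k ^ 2 - 1) / (Rem * (D x y) ^ 3)) * (k * Real.sin (2 * π * x))) ∧
      -- (iii) divergence-free (zero) velocity: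
      (deriv (fun _x' : ℝ => (0 : ℝ)) x + deriv (fun _y' : ℝ => (0 : ℝ)) y = 0) ∧
      -- (iv) divergence-free magnetic field:
      (deriv (fun x' : ℝ => Real.sinh (2 * π * y) / D x' y) x
        + deriv (fun y' : ℝ => k * Real.sin (2 * π * x) / D x y') y = 0) := by
  have hDpos : ∀ x y : ℝ, 0 < D x y := by
    intro x y
    rw [hD]
    have h1 : (1:ℝ) ≤ Real.cosh (2*π*y) := Real.one_le_cosh _
    have h2 : |Real.cos (2*π*x)| ≤ 1 := Real.abs_cos_le_one _
    have := abs_le.mp h2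
    nlinarith
  have hDne : ∀ x y : ℝ, D x y ≠ 0 := fun x y => (hDpos x y).ne'
  -- derivative of D in x
  have hDx : ∀ x y : ℝ, HasDerivAt (fun x' => D x' y)
      (-(2*π) * (k * Real.sin (2*π*x))) x := by
    intro x y
    have he : (fun x' => D x' y) = fun x' => Real.cosh (2*π*y) + k * Real.cos (2*π*x') :=
      funext fun x' => hD x' y
    rw [he]
    have h := (((Real.hasDerivAt_cos (2*π*x)).comp x
      ((hasDerivAt_id x).const_mul (2*π))).const_mul k).const_add (Real.cosh (2*π*y))
    exact h.congr_deriv (by ring)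
  -- derivative of D in y
  have hDy : ∀ x y : ℝ, HasDerivAt (fun y' => D x y')
      (2*π * Real.sinh (2*π*y)) y := by
    intro x y
    have he : (fun y' => D x y') = fun y' => Real.cosh (2*π*y') + k * Real.cos (2*π*x) :=
      funext fun y' => hD x y'
    rw [he]
    have h := (((Real.hasDerivAt_cosh (2*π*y)).comp y
      ((hasDerivAt_id y).const_mul (2*π)))).add_const (k * Real.cos (2*π*x))
    exact h.congr_deriv (by ring)
  -- closed form of j
  have hjv : ∀ x y : ℝ, j x y = 2*π*(k^2-1) / (D x y)^2 := by
    intro x y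
    rw [hj]
    have hN1 : HasDerivAt (fun x' : ℝ => k * Real.sin (2*π*x'))
        (k * (Real.cos (2*π*x) * (2*π*1))) x :=
      ((Real.hasDerivAt_sin (2*π*x)).comp x ((hasDerivAt_id x).const_mul (2*π))).const_mul k
    have hq1 := (hN1.div (hDx x y) (hDne x y)).deriv
    have hN2 : HasDerivAt (fun y' : ℝ => Real.sinh (2*π*y'))
        (Real.cosh (2*π*y) * (2*π*1)) y :=
      (Real.hasDerivAt_sinh (2*π*y)).comp y ((hasDerivAt_id y).const_mul (2*π))
    have hq2 := (hN2.div (hDy x y) (hDne x y)).deriv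
    simp only [Pi.div_def] at hq1 hq2
    rw [hq1, hq2]
    simp only [hD]
    have hcs := Real.sin_sq_add_cos_sq (2*π*x)
    have hch := Real.cosh_sq_sub_sinh_sq (2*π*y)
    set C := Real.cosh (2*π*y)
    set S := Real.sinh (2*π*y)
    set c := Real.cos (2*π*x)
    set s := Real.sin (2*π*x)
    linear_combination (2*π*k^2/(C + k*c)^2) * hcs - (2*π/(C + k*c)^2) * hch
  intro x y
  have hcs := Real.sin_sq_add_cos_sq (2*π*x)
  have hch := Real.cosh_sq_sub_sinh_sq (2*π*y)
  refine ⟨?_, ?_, ?_, ?_, ?_, ?_⟩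
  · -- ∂x p + j * (k sin /D) = 0
    have hpx : (fun x' : ℝ => p x' y) = fun x' => ((1 - k ^ 2) / 2) * (1 + 1 / (D x' y) ^ 2) :=
      funext fun x' => hp x' y
    rw [hpx]
    have hpow : HasDerivAt (fun x' => (D x' y)^2)
        (2 * (D x y)^1 * (-(2*π) * (k * Real.sin (2*π*x)))) x := (hDx x y).pow 2
    have hpowne : (D x y)^2 ≠ 0 := pow_ne_zero _ (hDne x y)
    have hinv := ((hasDerivAt_const x (1:ℝ)).div hpow hpowne)
    have hd := ((hinv.const_add (1:ℝ)).const_mul ((1 - k ^ 2) / 2)).deriv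
    simp only [Pi.div_def] at hd
    rw [hd, hjv]
    have h0 : D x y ≠ 0 := hDne x y
    field_simp
    ring
  · have hpy : (fun y' : ℝ => p x y') = fun y' => ((1 - k ^ 2) / 2) * (1 + 1 / (D x y') ^ 2) :=
      funext fun y' => hp x y'
    rw [hpy]
    have hpow : HasDerivAt (fun y' => (D x y')^2)
        (2 * (D x y)^1 * (2*π * Real.sinh (2*π*y))) y := (hDy x y).pow 2
    have hpowne : (D x y)^2 ≠ 0 := pow_ne_zero _ (hDne x y)
    have hinv := ((hasDerivAt_const y (1:ℝ)).div hpow hpowne)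
    have hd := ((hinv.const_add (1:ℝ)).const_mul ((1 - k ^ 2) / 2)).deriv
    simp only [Pi.div_def] at hd
    rw [hd, hjv]
    have h0 : D x y ≠ 0 := hDne x y
    field_simp
    ring
  · -- ∂y j
    have hje : (fun y' : ℝ => j x y') = fun y' => 2*π*(k^2-1) / (D x y')^2 :=
      funext fun y' => hjv x y'
    rw [hje]
    have hpow : HasDerivAt (fun y' => (D x y')^2)
        (2 * (D x y)^1 * (2*π * Real.sinh (2*π*y))) y := (hDy x y).pow 2
    have hpowne : (D x y)^2 ≠ 0 := pow_ne_zero _ (hDne x y)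
    have hd := ((hasDerivAt_const y (2*π*(k^2-1))).div hpow hpowne).deriv
    simp only [Pi.div_def] at hd
    rw [hd]
    have h0 : D x y ≠ 0 := hDne x y
    have hR0 : Rem ≠ 0 := hRem.ne'
    field_simp
    ring
  · have hje : (fun x' : ℝ => j x' y) = fun x' => 2*π*(k^2-1) / (D x' y)^2 :=
      funext fun x' => hjv x' y
    rw [hje]
    have hpow : HasDerivAt (fun x' => (D x' y)^2)
        (2 * (D x y)^1 * (-(2*π) * (k * Real.sin (2*π*x)))) x := (hDx x y).pow 2
    have hpowne : (D x y)^2 ≠ 0 := pow_ne_zero _ (hDne x y)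
    have hd := ((hasDerivAt_const x (2*π*(k^2-1))).div hpow hpowne).deriv
    simp only [Pi.div_def] at hd
    rw [hd]
    have h0 : D x y ≠ 0 := hDne x y
    have hR0 : Rem ≠ 0 := hRem.ne'
    field_simp
    ring
  · simp
  · have h1 := ((hasDerivAt_const x (Real.sinh (2*π*y))).div (hDx x y) (hDne x y)).deriv
    have h2 := ((hasDerivAt_const y (k * Real.sin (2*π*x))).div (hDy x y) (hDne x y)).deriv
    simp only [Pi.div_def] at h1 h2
    rw [h1, h2]
    have h0 : D x y ≠ 0 := hDne x y
    field_simp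
    ring
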